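/- Let q : E → B be a surjective local homeomorphism of topological spaces where B is a Boolean space, let U ⊆ B be a compact open set, and let e ∈ E with q(e) ∈ U. Then there exists a continuous section s : U → E above U passing through e; that is, a continuous map s from the subspace U to E with q(s(u)) = u for all u ∈ U and s(q(e)) = e. -/

import Mathlib

open TopologicalSpace Set

/-- Glue two sections over clopen sets, preferring the first. -/
lemma glue_sections {E B : Type*} [TopologicalSpace E] [TopologicalSpace B]
    (q : E → B) (C1 C2 : Set B) (h1o : IsOpen C1) (h1c : IsClosed C1) (h2o : IsOpen C2)
    (s1 : C1 → E) (s2 : C2 → E) (hc1 : Continuous s1) (hc2 : Continuous s2)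
    (hq1 : ∀ u, q (s1 u) = u) (hq2 : ∀ u, q (s2 u) = u) :
    ∃ t : ↥(C1 ∪ C2) → E, Continuous t ∧ (∀ u, q (t u) = u) ∧
      ∀ (u : ↥(C1 ∪ C2)) (h : (u : B) ∈ C1), t u = s1 ⟨u, h⟩ := by
  classical
  refine ⟨fun u => if h : (u : B) ∈ C1 then s1 ⟨u, h⟩ else s2 ⟨u, u.2.resolve_left h⟩,
    ?_, ?_, ?_⟩
  · set A : Set ↥(C1 ∪ C2) := Subtype.val ⁻¹' C1 with hA
    have hAo : IsOpen A := h1o.preimage continuous_subtype_val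
    have hAc : IsClosed A := h1c.preimage continuous_subtype_val
    rw [continuous_iff_continuousAt]
    intro x
    by_cases hx : x ∈ A
    · have honA : ContinuousOn
          (fun u : ↥(C1 ∪ C2) => if h : (u : B) ∈ C1 then s1 ⟨u, h⟩
            else s2 ⟨u, u.2.resolve_left h⟩) A := by
        rw [continuousOn_iff_continuous_restrict]
        have : (A.domRestrict fun u : ↥(C1 ∪ C2) => if h : (u : B) ∈ C1 then s1 ⟨u, h⟩
            else s2 ⟨u, u.2.resolve_left h⟩) = fun u : A => s1 ⟨u.1.1, u.2⟩ :=
          funext fun u => dif_pos u.2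
        rw [this]
        exact hc1.comp (Continuous.subtype_mk
          (continuous_subtype_val.comp continuous_subtype_val) _)
      exact honA.continuousAt (hAo.mem_nhds hx)
    · have honA : ContinuousOn
          (fun u : ↥(C1 ∪ C2) => if h : (u : B) ∈ C1 then s1 ⟨u, h⟩
            else s2 ⟨u, u.2.resolve_left h⟩) Aᶜ := by
        rw [continuousOn_iff_continuous_restrict]
        have : (Aᶜ.domRestrict fun u : ↥(C1 ∪ C2) => if h : (u : B) ∈ C1 then s1 ⟨u, h⟩
            else s2 ⟨u, u.2.resolve_left h⟩) =
            fun u : ↥Aᶜ => s2 ⟨u.1.1, u.1.2.resolve_left u.2⟩ :=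
          funext fun u => dif_neg u.2
        rw [this]
        exact hc2.comp (Continuous.subtype_mk
          (continuous_subtype_val.comp continuous_subtype_val) _)
      exact honA.continuousAt (hAc.isOpen_compl.mem_nhds hx)
  · intro u
    by_cases h : (u : B) ∈ C1
    · simp only [dif_pos h]; exact hq1 _
    · simp only [dif_neg h]; exact hq2 _
  · intro u h
    simp only [dif_pos h]

theorem exists_section_through_point {E B : Type*}
    [TopologicalSpace E] [TopologicalSpace B]
    [T2Space B] [LocallyCompactSpace B]
    (hB : TopologicalSpace.IsTopologicalBasis {s : Set B | IsClopen s})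
    (q : E → B) (hq : IsLocalHomeomorph q) (hqsurj : Function.Surjective q)
    (U : Set B) (hUcomp : IsCompact U) (hUopen : IsOpen U)
    (e : E) (he : q e ∈ U) :
    ∃ s : U → E, Continuous s ∧ (∀ u : U, q (s u) = u) ∧ s ⟨q e, he⟩ = e := by
  classical
  have hNE : Nonempty E := ⟨e⟩
  -- a clopen compact neighborhood with section through any point, more precisely:
  -- helper producing clopen compact W inside an open O around x with a section
  have key : ∀ (e' : E) (O : Set B), IsOpen O → q e' ∈ O →
      ∃ W : Set B, IsClopen W ∧ IsCompact W ∧ q e' ∈ W ∧ W ⊆ O ∧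
        ∃ s : W → E, Continuous s ∧ (∀ u, q (s u) = u) ∧
          ∀ h : q e' ∈ W, s ⟨q e', h⟩ = e' := by
    intro e' O hOopen hmem
    obtain ⟨φ, heφ, hφ⟩ := hq e'
    obtain ⟨N, hNcomp, hNnhds⟩ := exists_compact_mem_nhds (q e')
    have hx : q e' ∈ φ.target ∩ (O ∩ interior N) := by
      refine ⟨?_, hmem, mem_interior_iff_mem_nhds.2 hNnhds⟩
      have : q e' = φ e' := by rw [hφ]
      rw [this]; exact φ.map_source heφ
    obtain ⟨W, hWclopen, hxW, hWsub⟩ := hB.exists_subset_of_mem_open hx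
      (φ.open_target.inter (hOopen.inter isOpen_interior))
    have hWsubT : W ⊆ φ.target := fun u hu => (hWsub hu).1
    have hWcomp : IsCompact W :=
      hNcomp.of_isClosed_subset hWclopen.isClosed
        (fun u hu => interior_subset (hWsub hu).2.2)
    refine ⟨W, hWclopen, hWcomp, hxW, fun u hu => (hWsub hu).2.1,
      fun u => φ.symm u.1, ?_, ?_, ?_⟩
    · exact continuousOn_iff_continuous_restrict.mp (φ.symm.continuousOn.mono hWsubT)
    · intro u
      have : q (φ.symm u.1) = φ (φ.symm u.1) := by rw [hφ]
      rw [this, φ.right_inv (hWsubT u.2)]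
    · intro h
      have hqe : q e' = φ e' := by rw [hφ]
      show φ.symm (q e') = e'
      rw [hqe, φ.left_inv heφ]
  -- general existence of sections over compact sets (inside some compact open superset)
  have main : ∀ K : Set B, IsCompact K →
      ∃ V : Set B, IsCompact V ∧ IsOpen V ∧ K ⊆ V ∧
        ∃ s : V → E, Continuous s ∧ ∀ u, q (s u) = u := by
    intro K hK
    refine hK.induction_on ?_ ?_ ?_ ?_
    · exact ⟨∅, isCompact_empty, isOpen_empty, Subset.rfl,
        fun _ => Classical.arbitrary E, continuous_const, fun u => absurd u.2 (notMem_empty u.1)⟩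
    · rintro s t hst ⟨V, hVc, hVo, htV, hs⟩
      exact ⟨V, hVc, hVo, hst.trans htV, hs⟩
    · rintro s t ⟨V1, hV1c, hV1o, hsV1, s1, hc1, hq1⟩ ⟨V2, hV2c, hV2o, htV2, s2, hc2, hq2⟩
      obtain ⟨t', htc, htq, -⟩ := glue_sections q V1 V2 hV1o hV1c.isClosed hV2o
        s1 s2 hc1 hc2 hq1 hq2
      exact ⟨V1 ∪ V2, hV1c.union hV2c, hV1o.union hV2o,
        union_subset_union hsV1 htV2, t', htc, htq⟩
    · intro x hx
      obtain ⟨e', he'⟩ := hqsurj x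
      obtain ⟨W, hWclopen, hWcomp, hxW, -, s, hsc, hsq, -⟩ :=
        key e' univ isOpen_univ (mem_univ _)
      rw [he'] at hxW
      exact ⟨W, mem_nhdsWithin_of_mem_nhds (hWclopen.isOpen.mem_nhds hxW),
        ⟨W, hWcomp, hWclopen.isOpen, Subset.rfl, s, hsc, hsq⟩⟩
  -- section through e on a clopen compact W0 ⊆ U
  obtain ⟨W0, hW0clopen, hW0comp, heW0, hW0U, s0, hs0c, hs0q, hs0e⟩ := key e U hUopen he
  -- general section on a compact open V ⊇ U
  obtain ⟨V, hVcomp, hVopen, hUV, s1, hs1c, hs1q⟩ := main U hUcomp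
  obtain ⟨t, htc, htq, hte⟩ := glue_sections q W0 V hW0clopen.isOpen hW0clopen.isClosed hVopen
    s0 s1 hs0c hs1c hs0q hs1q
  refine ⟨fun u => t ⟨u.1, Or.inr (hUV u.2)⟩, ?_, ?_, ?_⟩
  · exact htc.comp (Continuous.subtype_mk continuous_subtype_val _)
  · intro u; exact htq _
  · exact (hte ⟨q e, Or.inr (hUV he)⟩ heW0).trans (hs0e heW0)
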